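/- arXiv:2311.11854 — 3 statements merged into one kernel-verified Lean document; each statement's English description precedes it below -/
import Mathlib

section
/- For every natural number n, the Neumann approximation error satisfies the convergence-rate estimate ‖u* − u^{[n]}‖_Y ≤ exp(M·t*)·((M·t*)^{n+1}/(n+1)!)·‖g‖_Y. -/
open scoped Nat

/-- Pointwise bound `‖(K^d u)(t)‖ ≤ M^d t^d / d! ‖u‖`. -/
lemma key_pointwise
    {E : Type*} [NormedAddCommGroup E] [NormedSpace ℂ E] [CompleteSpace E]
    (T : ℝ) (hT : 0 < T) (M : ℝ)
    (A : ℝ → ℝ → (E →L[ℂ] E))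
    (hAbound : ∀ t τ : ℝ, 0 ≤ τ → τ ≤ t → t ≤ T → ‖A t τ‖ ≤ M)
    (K : C(Set.Icc (0:ℝ) T, E) →L[ℂ] C(Set.Icc (0:ℝ) T, E))
    (hK : ∀ (u : C(Set.Icc (0:ℝ) T, E)) (t : Set.Icc (0:ℝ) T),
      (K u) t = ∫ τ in (0:ℝ)..(t:ℝ), A t τ (u (Set.projIcc 0 T hT.le τ))) :
    ∀ (d : ℕ) (u : C(Set.Icc (0:ℝ) T, E)) (t : Set.Icc (0:ℝ) T),
      ‖(K ^ d) u t‖ ≤ M ^ d * (t:ℝ) ^ d / d.factorial * ‖u‖ := by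
  have hM : 0 ≤ M := le_trans (norm_nonneg _) (hAbound 0 0 le_rfl le_rfl hT.le)
  intro d
  induction d with
  | zero => intro u t; simpa using u.norm_coe_le_norm t
  | succ d ih =>
    intro u t
    have ht0 : (0:ℝ) ≤ (t:ℝ) := t.2.1
    have htT : (t:ℝ) ≤ T := t.2.2
    have hpow : (K ^ (d+1)) u = K ((K ^ d) u) := by
      rw [pow_succ' K d]; rfl
    rw [hpow, hK]
    have hb : ∀ᵐ τ ∂(MeasureTheory.volume.restrict (Set.uIoc (0:ℝ) (t:ℝ))),
        ‖A t τ ((K ^ d) u (Set.projIcc 0 T hT.le τ))‖ ≤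
          M ^ (d+1) * τ ^ d / d.factorial * ‖u‖ := by
      filter_upwards [MeasureTheory.ae_restrict_mem measurableSet_uIoc] with τ hτ
      rw [Set.uIoc_of_le ht0] at hτ
      have hτ0 : 0 ≤ τ := le_of_lt hτ.1
      have hτt : τ ≤ (t:ℝ) := hτ.2
      have hτT : τ ≤ T := hτt.trans htT
      have hproj : Set.projIcc 0 T hT.le τ = ⟨τ, hτ0, hτT⟩ :=
        Set.projIcc_of_mem hT.le ⟨hτ0, hτT⟩
      calc ‖A t τ ((K ^ d) u (Set.projIcc 0 T hT.le τ))‖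
          ≤ ‖A (t:ℝ) τ‖ * ‖(K ^ d) u (Set.projIcc 0 T hT.le τ)‖ :=
            (A t τ).le_opNorm _
        _ ≤ M * (M ^ d * τ ^ d / d.factorial * ‖u‖) := by
            apply mul_le_mul (hAbound t τ hτ0 hτt htT) ?_ (norm_nonneg _) hM
            have := ih u ⟨τ, hτ0, hτT⟩
            rw [hproj]; simpa using this
        _ = M ^ (d+1) * τ ^ d / d.factorial * ‖u‖ := by ring
    have hint : IntervalIntegrable
        (fun τ : ℝ => M ^ (d+1) * τ ^ d / d.factorial * ‖u‖)
        MeasureTheory.volume 0 (t:ℝ) := by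
      exact (((continuous_const.mul (continuous_pow d)).div_const _).mul continuous_const).intervalIntegrable _ _
    have := intervalIntegral.norm_integral_le_abs_of_norm_le hb hint
    refine this.trans ?_
    have hval : ∫ τ in (0:ℝ)..(t:ℝ), M ^ (d+1) * τ ^ d / d.factorial * ‖u‖
        = M ^ (d+1) * ‖u‖ / d.factorial * ((t:ℝ) ^ (d+1) / (d+1)) := by
      rw [show (fun τ : ℝ => M ^ (d+1) * τ ^ d / d.factorial * ‖u‖)
          = fun τ : ℝ => (M ^ (d+1) * ‖u‖ / d.factorial) * τ ^ d by funext τ; ring]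
      rw [intervalIntegral.integral_const_mul, integral_pow]
      ring
    rw [hval, abs_of_nonneg (by positivity), Nat.factorial_succ]
    apply le_of_eq
    have hd : (d.factorial : ℝ) ≠ 0 := by positivity
    have hd1 : ((d:ℝ) + 1) ≠ 0 := by positivity
    push_cast
    field_simp

/-- For every natural number `n`, the Neumann approximation error satisfies the
convergence-rate estimate `‖u* − u^{[n]}‖_Y ≤ exp(M·t*)·((M·t*)^{n+1}/(n+1)!)·‖g‖_Y`. -/
theorem stmt3
    {E : Type*} [NormedAddCommGroup E] [NormedSpace ℂ E] [CompleteSpace E]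
    (T : ℝ) (hT : 0 < T) (M : ℝ)
    (A : ℝ → ℝ → (E →L[ℂ] E))
    (hAcont : ContinuousOn (fun p : ℝ × ℝ => A p.1 p.2)
      {p : ℝ × ℝ | 0 ≤ p.2 ∧ p.2 ≤ p.1 ∧ p.1 ≤ T})
    (hAbound : ∀ t τ : ℝ, 0 ≤ τ → τ ≤ t → t ≤ T → ‖A t τ‖ ≤ M)
    (K : C(Set.Icc (0:ℝ) T, E) →L[ℂ] C(Set.Icc (0:ℝ) T, E))
    (hK : ∀ (u : C(Set.Icc (0:ℝ) T, E)) (t : Set.Icc (0:ℝ) T),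
      (K u) t = ∫ τ in (0:ℝ)..(t:ℝ), A t τ (u (Set.projIcc 0 T hT.le τ)))
    (g : C(Set.Icc (0:ℝ) T, E))
    (ustar : C(Set.Icc (0:ℝ) T, E))
    (hlim : Filter.Tendsto (fun n => ∑ d ∈ Finset.range (n+1), (K ^ d) g)
      Filter.atTop (nhds ustar))
    (n : ℕ) :
    ‖ustar - ∑ d ∈ Finset.range (n+1), (K ^ d) g‖ ≤
      Real.exp (M * T) * ((M * T) ^ (n+1) / (n+1).factorial) * ‖g‖ := by
  have hM : 0 ≤ M := le_trans (norm_nonneg _) (hAbound 0 0 le_rfl le_rfl hT.le)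
  have hkey := key_pointwise T hT M A hAbound K hK
  -- operator norm bound
  have hop : ∀ (d : ℕ) (u : C(Set.Icc (0:ℝ) T, E)),
      ‖(K ^ d) u‖ ≤ (M * T) ^ d / d.factorial * ‖u‖ := by
    intro d u
    refine ContinuousMap.norm_le _ (by positivity) |>.mpr fun t => ?_
    refine (hkey d u t).trans ?_
    rw [mul_pow]
    have h1 : (t:ℝ) ^ d ≤ T ^ d := pow_le_pow_left₀ t.2.1 t.2.2 d
    gcongr M ^ d * ?_ / _ * _
  set S : ℕ → C(Set.Icc (0:ℝ) T, E) := fun m => ∑ d ∈ Finset.range (m+1), (K ^ d) g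
    with hS
  -- ‖ustar‖ ≤ exp (M*T) * ‖g‖
  have hustar : ‖ustar‖ ≤ Real.exp (M * T) * ‖g‖ := by
    refine le_of_tendsto hlim.norm (Filter.Eventually.of_forall fun m => ?_)
    calc ‖S m‖ ≤ ∑ d ∈ Finset.range (m+1), ‖(K ^ d) g‖ := norm_sum_le _ _
      _ ≤ ∑ d ∈ Finset.range (m+1), (M * T) ^ d / d.factorial * ‖g‖ := by
          exact Finset.sum_le_sum fun d _ => hop d g
      _ = (∑ d ∈ Finset.range (m+1), (M * T) ^ d / d.factorial) * ‖g‖ := by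
          rw [Finset.sum_mul]
      _ ≤ Real.exp (M * T) * ‖g‖ := by
          gcongr
          exact Real.sum_le_exp_of_nonneg (by positivity) _
  -- ustar - S n = K^(n+1) ustar
  have htel : ustar - S n = (K ^ (n+1)) ustar := by
    have h1 : Filter.Tendsto (fun m => (K ^ (n+1)) (S m)) Filter.atTop
        (nhds ((K ^ (n+1)) ustar)) :=
      ((K ^ (n+1)).continuous.tendsto ustar).comp hlim
    have h2 : ∀ m, (K ^ (n+1)) (S m) = S (m + (n+1)) - S n := by
      intro m
      show (K ^ (n+1)) (∑ d ∈ Finset.range (m+1), (K ^ d) g)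
        = (∑ d ∈ Finset.range (m+(n+1)+1), (K ^ d) g)
          - ∑ d ∈ Finset.range (n+1), (K ^ d) g
      rw [show m+(n+1)+1 = (n+1)+(m+1) by omega,
        Finset.sum_range_add (fun d => (K ^ d) g) (n+1) (m+1), add_sub_cancel_left, map_sum]
      refine Finset.sum_congr rfl fun d _ => ?_
      rw [← ContinuousLinearMap.mul_apply, ← pow_add]
    have h3 : Filter.Tendsto (fun m => S (m + (n+1)) - S n) Filter.atTop
        (nhds (ustar - S n)) := by
      exact (hlim.comp (Filter.tendsto_add_atTop_nat (n+1))).sub_const _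
    have h1' : Filter.Tendsto (fun m => S (m + (n+1)) - S n) Filter.atTop
        (nhds ((K ^ (n+1)) ustar)) := by simpa only [h2] using h1
    exact tendsto_nhds_unique h3 h1'
  show ‖ustar - S n‖ ≤ _
  rw [htel]
  calc ‖(K ^ (n+1)) ustar‖ ≤ (M * T) ^ (n+1) / (n+1).factorial * ‖ustar‖ := hop _ _
    _ ≤ (M * T) ^ (n+1) / (n+1).factorial * (Real.exp (M * T) * ‖g‖) := by
        gcongr
    _ = Real.exp (M * T) * ((M * T) ^ (n+1) / (n+1).factorial) * ‖g‖ := by ring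
end

section
/- If c : ℝ → ℂ is continuously differentiable on [0,t] with t > 0 and ω > 0, then |∫₀ᵗ c(s)·e^{iωs} ds| ≤ C̄·min{t, ω⁻¹}, where C̄ = 2·sup_{s∈[0,t]}|c(s)| + t·sup_{s∈[0,t]}|c'(s)|. -/
/-- If `c : ℝ → ℂ` is continuously differentiable on `[0,t]` with `t > 0` and
`ω > 0`, then `|∫₀ᵗ c(s)·e^{iωs} ds| ≤ C̄·min{t, ω⁻¹}`, where
`C̄ = 2·sup_{s∈[0,t]}|c(s)| + t·sup_{s∈[0,t]}|c'(s)|`. -/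
theorem stmt4 (t ω : ℝ) (ht : 0 < t) (hω : 0 < ω)
    (c c' : ℝ → ℂ)
    (hderiv : ∀ s ∈ Set.Icc (0:ℝ) t, HasDerivAt c (c' s) s)
    (hc' : ContinuousOn c' (Set.Icc (0:ℝ) t)) :
    ‖∫ s in (0:ℝ)..t, c s * Complex.exp (Complex.I * ω * s)‖ ≤
      (2 * (⨆ s : Set.Icc (0:ℝ) t, ‖c s‖) +
        t * (⨆ s : Set.Icc (0:ℝ) t, ‖c' s‖)) * min t ω⁻¹ := by
  have huIcc : Set.uIcc (0:ℝ) t = Set.Icc 0 t := Set.uIcc_of_le ht.le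
  have hcont : ContinuousOn c (Set.Icc 0 t) := fun x hx =>
    (hderiv x hx).continuousAt.continuousWithinAt
  set M := ⨆ s : Set.Icc (0:ℝ) t, ‖c s‖ with hMdef
  set M' := ⨆ s : Set.Icc (0:ℝ) t, ‖c' s‖ with hM'def
  have hbM : BddAbove (Set.range fun s : Set.Icc (0:ℝ) t => ‖c s‖) := by
    rw [show (fun s : Set.Icc (0:ℝ) t => ‖c s‖)
        = (Set.Icc (0:ℝ) t).domRestrict (fun s => ‖c s‖) from rfl,
      Set.range_domRestrict]
    exact (isCompact_Icc.image_of_continuousOn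
      (continuous_norm.comp_continuousOn hcont)).bddAbove
  have hbM' : BddAbove (Set.range fun s : Set.Icc (0:ℝ) t => ‖c' s‖) := by
    rw [show (fun s : Set.Icc (0:ℝ) t => ‖c' s‖)
        = (Set.Icc (0:ℝ) t).domRestrict (fun s => ‖c' s‖) from rfl,
      Set.range_domRestrict]
    exact (isCompact_Icc.image_of_continuousOn
      (continuous_norm.comp_continuousOn hc')).bddAbove
  have hM : ∀ s ∈ Set.Icc (0:ℝ) t, ‖c s‖ ≤ M := fun s hs =>
    le_ciSup hbM ⟨s, hs⟩
  have hM' : ∀ s ∈ Set.Icc (0:ℝ) t, ‖c' s‖ ≤ M' := fun s hs =>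
    le_ciSup hbM' ⟨s, hs⟩
  have hM0 : 0 ≤ M := le_trans (norm_nonneg _) (hM 0 ⟨le_rfl, ht.le⟩)
  have hM'0 : 0 ≤ M' := le_trans (norm_nonneg _) (hM' 0 ⟨le_rfl, ht.le⟩)
  have hC0 : 0 ≤ 2 * M + t * M' := by positivity
  have hexpnorm : ∀ s : ℝ, ‖Complex.exp (Complex.I * ω * s)‖ = 1 := by
    intro s
    have h : Complex.I * ω * s = ((ω * s : ℝ) : ℂ) * Complex.I := by push_cast; ring
    rw [h, Complex.norm_exp_ofReal_mul_I]
  rw [mul_min_of_nonneg _ _ hC0]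
  apply le_min
  · -- trivial bound
    have h1 : ‖∫ s in (0:ℝ)..t, c s * Complex.exp (Complex.I * ω * s)‖ ≤ M * |t - 0| := by
      apply intervalIntegral.norm_integral_le_of_norm_le_const
      intro x hx
      have hx' : x ∈ Set.Icc (0:ℝ) t := by
        rw [Set.uIoc_of_le ht.le] at hx
        exact Set.Ioc_subset_Icc_self hx
      rw [norm_mul, hexpnorm, mul_one]
      exact hM x hx'
    calc ‖∫ s in (0:ℝ)..t, c s * Complex.exp (Complex.I * ω * s)‖
        ≤ M * |t - 0| := h1
      _ = M * t := by rw [sub_zero, abs_of_pos ht]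
      _ ≤ (2 * M + t * M') * t := by nlinarith [mul_nonneg hM0 ht.le, mul_nonneg hM'0 (mul_nonneg ht.le ht.le)]
  · -- integration by parts
    have hIω : (Complex.I * ω : ℂ) ≠ 0 :=
      mul_ne_zero Complex.I_ne_zero (by exact_mod_cast hω.ne')
    set v : ℝ → ℂ := fun s => Complex.exp (Complex.I * ω * s) / (Complex.I * ω) with hvdef
    have hv : ∀ s : ℝ, HasDerivAt v (Complex.exp (Complex.I * ω * s)) s := by
      intro s
      have h2 : HasDerivAt (fun z : ℂ => Complex.I * ω * z) (Complex.I * ω) (s : ℂ) := by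
        simpa using (hasDerivAt_id (s : ℂ)).const_mul (Complex.I * ω)
      have h4 := (h2.cexp).div_const (Complex.I * ω)
      have h5 : Complex.exp (Complex.I * ω * s) * (Complex.I * ω) / (Complex.I * ω)
          = Complex.exp (Complex.I * ω * s) := mul_div_cancel_right₀ _ hIω
      have h6 : HasDerivAt (fun z : ℂ => Complex.exp (Complex.I * ω * z) / (Complex.I * ω))
          (Complex.exp (Complex.I * ω * s)) (s : ℂ) := h5 ▸ h4
      exact h6.comp_ofReal
    have hvnorm : ∀ s : ℝ, ‖v s‖ = ω⁻¹ := by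
      intro s
      rw [hvdef]
      simp only [norm_div, norm_mul, hexpnorm, Complex.norm_I,
        Complex.norm_real, Real.norm_eq_abs, abs_of_pos hω, one_mul, one_div]
    have hc'int : IntervalIntegrable c' MeasureTheory.volume 0 t := by
      apply ContinuousOn.intervalIntegrable
      rwa [huIcc]
    have hvint : IntervalIntegrable (fun s : ℝ => Complex.exp (Complex.I * ω * s))
        MeasureTheory.volume 0 t := by
      apply Continuous.intervalIntegrable
      exact Complex.continuous_exp.comp ((continuous_const).mul Complex.continuous_ofReal)
    have hibp := intervalIntegral.integral_mul_deriv_eq_deriv_mul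
      (u := c) (u' := c') (v := v) (v' := fun s => Complex.exp (Complex.I * ω * s))
      (fun x hx => hderiv x (huIcc ▸ hx)) (fun x _ => hv x) hc'int hvint
    rw [hibp]
    have hbd : ‖∫ s in (0:ℝ)..t, c' s * v s‖ ≤ M' * ω⁻¹ * |t - 0| := by
      apply intervalIntegral.norm_integral_le_of_norm_le_const
      intro x hx
      have hx' : x ∈ Set.Icc (0:ℝ) t := by
        rw [Set.uIoc_of_le ht.le] at hx
        exact Set.Ioc_subset_Icc_self hx
      rw [norm_mul, hvnorm]
      exact mul_le_mul_of_nonneg_right (hM' x hx') (by positivity)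
    have h1 : ‖c t * v t‖ ≤ M * ω⁻¹ := by
      rw [norm_mul, hvnorm]
      exact mul_le_mul_of_nonneg_right (hM t ⟨ht.le, le_rfl⟩) (by positivity)
    have h2 : ‖c 0 * v 0‖ ≤ M * ω⁻¹ := by
      rw [norm_mul, hvnorm]
      exact mul_le_mul_of_nonneg_right (hM 0 ⟨le_rfl, ht.le⟩) (by positivity)
    have habs : |t - 0| = t := by rw [sub_zero, abs_of_pos ht]
    calc ‖c t * v t - c 0 * v 0 - ∫ s in (0:ℝ)..t, c' s * v s‖
        ≤ ‖c t * v t - c 0 * v 0‖ + ‖∫ s in (0:ℝ)..t, c' s * v s‖ := norm_sub_le _ _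
      _ ≤ (‖c t * v t‖ + ‖c 0 * v 0‖) + ‖∫ s in (0:ℝ)..t, c' s * v s‖ := by
          gcongr; exact norm_sub_le _ _
      _ ≤ (M * ω⁻¹ + M * ω⁻¹) + M' * ω⁻¹ * t := by
          rw [habs] at hbd; gcongr
      _ = (2 * M + t * M') * ω⁻¹ := by ring
end

section
/- For every t ≥ 0, every natural number n ≥ 1, and every real ω > 0: ∫₀ᵗ e^{iωτ}·exp((t−τ)·L)·α·exp(τ·L)·u₀ dτ = Σ_{m=0}^{n−1} (iω)^{−(m+1)}·(e^{iωt}·ad_L^m(α)·exp(t·L) − exp(t·L)·ad_L^m(α))·u₀ + (iω)^{−n}·∫₀ᵗ e^{iωτ}·exp((t−τ)·L)·ad_L^n(α)·exp(τ·L)·u₀ dτ. -/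
/-- Iterated commutator: `adL L 0 x = x`, `adL L (k+1) x = L * adL L k x - adL L k x * L`. -/
def adL {A : Type*} [Ring A] (L : A) : ℕ → A → A
  | 0, x => x
  | k+1, x => L * adL L k x - adL L k x * L

open NormedSpace Complex intervalIntegral

section key
variable {A : Type*} [NormedRing A] [NormedAlgebra ℂ A] [CompleteSpace A]

omit [CompleteSpace A] in
private lemma Ecomm (L : A) (s : ℝ) : L * NormedSpace.exp ((s:ℂ) • L) = NormedSpace.exp ((s:ℂ) • L) * L :=
  (((Commute.refl L).smul_right ((s:ℂ))).exp_right).eq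

private lemma Econt (L : A) : Continuous (fun s : ℝ => NormedSpace.exp ((s:ℂ) • L)) :=
  (continuous_iff_continuousAt.2 fun x => (continuousOn_exp (𝕂 := ℂ)).continuousAt
    (Metric.isOpen_eball.mem_nhds (Metric.mem_eball.2
      ((expSeries_radius_eq_top ℂ A).symm ▸ edist_lt_top _ _)))).comp (Complex.continuous_ofReal.smul continuous_const)

private lemma hE (L : A) (τ : ℝ) :
    HasDerivAt (fun τ : ℝ => NormedSpace.exp ((τ:ℂ) • L)) (NormedSpace.exp ((τ:ℂ) • L) * L) τ := by
  have h := hasDerivAt_exp_smul_const (𝕂 := ℝ) L τ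
  simp only [Complex.coe_smul] at h ⊢
  exact h

private lemma hE1 (L : A) (t τ : ℝ) :
    HasDerivAt (fun τ : ℝ => NormedSpace.exp (((t - τ : ℝ):ℂ) • L))
      (-(NormedSpace.exp (((t - τ : ℝ):ℂ) • L) * L)) τ := by
  have hinner : HasDerivAt (fun τ : ℝ => t - τ) (-1) τ := by
    simpa using (hasDerivAt_id τ).const_sub t
  have h := (hE L (t - τ)).scomp τ hinner
  rw [neg_one_smul] at h
  exact h

lemma key (L β u₀ : A) (t : ℝ) (ω : ℝ) (hω : 0 < ω) :
    (∫ τ in (0:ℝ)..t, Complex.exp (Complex.I * ω * τ) •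
        (NormedSpace.exp (((t - τ : ℝ):ℂ) • L) * β * NormedSpace.exp ((τ:ℂ) • L) * u₀))
    = (Complex.I * ω)⁻¹ •
        ((Complex.exp (Complex.I * ω * t) • (β * NormedSpace.exp ((t:ℂ) • L))
          - NormedSpace.exp ((t:ℂ) • L) * β) * u₀)
      + (Complex.I * ω)⁻¹ •
        ∫ τ in (0:ℝ)..t, Complex.exp (Complex.I * ω * τ) •
          (NormedSpace.exp (((t - τ : ℝ):ℂ) • L) * (L * β - β * L) * NormedSpace.exp ((τ:ℂ) • L) * u₀) := by
  set c : ℂ := Complex.I * ω with hc_def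
  have hc : c ≠ 0 := mul_ne_zero Complex.I_ne_zero (by exact_mod_cast hω.ne')
  set E : ℝ → A := fun s => NormedSpace.exp ((s:ℂ) • L) with hE_def
  set F : ℝ → A := fun τ => E (t - τ) * β * E τ * u₀ with hF_def
  set H : ℝ → A := fun τ => E (t - τ) * (L * β - β * L) * E τ * u₀ with hH_def
  have hexp : ∀ τ : ℝ, HasDerivAt (fun τ : ℝ => Complex.exp (c * τ))
      (c * Complex.exp (c * τ)) τ := by
    intro τ
    have h := ((Complex.hasDerivAt_exp (c * (τ:ℂ))).comp (τ:ℂ)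
      ((hasDerivAt_id (τ:ℂ)).const_mul c)).comp_ofReal
    simp only [Function.comp_def, id_eq, mul_one] at h
    rw [mul_comm] at h
    exact h
  have hF : ∀ τ : ℝ, HasDerivAt F (-(H τ)) τ := by
    intro τ
    have h1 : HasDerivAt (fun τ : ℝ => E (t - τ) * β) (-(E (t - τ) * L) * β) τ :=
      (hE1 L t τ).mul_const β
    have h2 := (h1.mul (hE L τ)).mul_const u₀
    have heq : (-(E (t - τ) * L) * β * E τ + E (t - τ) * β * (E τ * L)) * u₀ = -(H τ) := by
      simp only [hH_def, hE_def]
      rw [← Ecomm L τ]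
      noncomm_ring
    rw [← heq]
    exact h2
  have hG : ∀ τ : ℝ, HasDerivAt (fun τ : ℝ => Complex.exp (c * τ) • F τ)
      (c • (Complex.exp (c * τ) • F τ) + Complex.exp (c * τ) • (-(H τ))) τ := by
    intro τ
    have h := (hexp τ).smul (hF τ)
    rw [add_comm, mul_smul] at h
    exact h
  have hFc : Continuous F :=
    ((((Econt L).comp (continuous_const.sub continuous_id)).mul continuous_const).mul
      (Econt L)).mul continuous_const
  have hHc : Continuous H :=
    ((((Econt L).comp (continuous_const.sub continuous_id)).mul continuous_const).mul
      (Econt L)).mul continuous_const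
  have hec : Continuous (fun τ : ℝ => Complex.exp (c * τ)) :=
    Complex.continuous_exp.comp (continuous_const.mul Complex.continuous_ofReal)
  have hint1 : IntervalIntegrable (fun τ : ℝ => c • (Complex.exp (c * τ) • F τ))
      MeasureTheory.volume 0 t :=
    (continuous_const.smul (hec.smul hFc)).intervalIntegrable _ _
  have hint2 : IntervalIntegrable (fun τ : ℝ => Complex.exp (c * τ) • (-(H τ)))
      MeasureTheory.volume 0 t :=
    (hec.smul hHc.neg).intervalIntegrable _ _
  have hftc := intervalIntegral.integral_eq_sub_of_hasDerivAt
    (f := fun τ : ℝ => Complex.exp (c * τ) • F τ)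
    (fun τ _ => hG τ) (hint1.add hint2)
  rw [intervalIntegral.integral_add hint1 hint2, intervalIntegral.integral_smul] at hftc
  have hneg : (∫ τ in (0:ℝ)..t, Complex.exp (c * τ) • (-(H τ)))
      = -∫ τ in (0:ℝ)..t, Complex.exp (c * τ) • H τ := by
    rw [← intervalIntegral.integral_neg]
    congr 1; ext τ; rw [smul_neg]
  rw [hneg] at hftc
  have h0 : Complex.exp (c * ((0:ℝ):ℂ)) • F 0 = F 0 := by norm_num
  rw [h0] at hftc
  have hFt : F t = β * E t * u₀ := by
    simp [hF_def, hE_def, sub_self]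
  have hF0 : F 0 = E t * β * u₀ := by
    simp [hF_def, hE_def]
  have hsolve : (∫ τ in (0:ℝ)..t, Complex.exp (c * τ) • F τ)
      = c⁻¹ • ((Complex.exp (c * t) • F t - F 0)
        + ∫ τ in (0:ℝ)..t, Complex.exp (c * τ) • H τ) := by
    rw [eq_inv_smul_iff₀ hc]
    linear_combination (norm := module) hftc
  rw [hsolve, hFt, hF0, smul_add]
  congr 2
  rw [sub_mul, smul_mul_assoc]

end key

/-- For every `t ≥ 0`, every `n ≥ 1`, and every real `ω > 0`:
`∫₀ᵗ e^{iωτ}·exp((t−τ)L)·α·exp(τL)·u₀ dτ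
 = Σ_{m=0}^{n−1} (iω)^{−(m+1)}·(e^{iωt}·ad_L^m(α)·exp(tL) − exp(tL)·ad_L^m(α))·u₀
   + (iω)^{−n}·∫₀ᵗ e^{iωτ}·exp((t−τ)L)·ad_L^n(α)·exp(τL)·u₀ dτ`. -/
theorem stmt6 {A : Type*} [NormedRing A] [NormedAlgebra ℂ A] [CompleteSpace A]
    (L α u₀ : A) (t : ℝ) (ht : 0 ≤ t) (n : ℕ) (hn : 1 ≤ n) (ω : ℝ) (hω : 0 < ω) :
    (∫ τ in (0:ℝ)..t, Complex.exp (Complex.I * ω * τ) •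
        (NormedSpace.exp (((t - τ : ℝ) : ℂ) • L) * α * NormedSpace.exp ((τ : ℂ) • L) * u₀))
    = (∑ m ∈ Finset.range n, ((Complex.I * ω) ^ (m + 1))⁻¹ •
        ((Complex.exp (Complex.I * ω * t) • (adL L m α * NormedSpace.exp ((t : ℂ) • L))
          - NormedSpace.exp ((t : ℂ) • L) * adL L m α) * u₀))
      + ((Complex.I * ω) ^ n)⁻¹ •
        ∫ τ in (0:ℝ)..t, Complex.exp (Complex.I * ω * τ) •
          (NormedSpace.exp (((t - τ : ℝ) : ℂ) • L) * adL L n α *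
            NormedSpace.exp ((τ : ℂ) • L) * u₀) := by
  induction n, hn using Nat.le_induction with
  | base =>
    rw [Finset.sum_range_one]
    simp only [zero_add, pow_one, show adL L 0 α = α from rfl]
    have h := key L α u₀ t ω hω
    rw [show (L * α - α * L) = adL L 1 α from rfl] at h
    exact h
  | succ n hn IH =>
    rw [IH]
    have hk := key L (adL L n α) u₀ t ω hω
    rw [show (L * adL L n α - adL L n α * L) = adL L (n+1) α from rfl] at hk
    have hpow : ((Complex.I * ω) ^ n)⁻¹ * (Complex.I * ω)⁻¹ = ((Complex.I * ω) ^ (n+1))⁻¹ := by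
      rw [pow_succ]; ring
    rw [hk, smul_add, smul_smul, smul_smul, hpow, Finset.sum_range_succ, add_assoc]
end
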